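/- Let C be an additive category with a zero object, I a set, and suppose the product of objects (c_i, ∅, ∅) exists in C◁Set for a family of objects c_i of C indexed by I. Then the product of the c_i exists in C. -/

import Mathlib

open CategoryTheory Limits

universe v u

/-- An object of the set-decorated category `C ◁ Set`: a triple `(c, S, f)` with `c` an
object of `C`, `S` a set, and `f : S → End c`, encoded as a function `ZFSet → End c`
vanishing outside `S` (the paper's convention that `f` evaluates to `0` outside `S`). -/
structure DecObj (C : Type u) [Category.{v} C] [Preadditive C] : Type (max u v 2) where
  c : C
  S : ZFSet.{0}
  f : ZFSet.{0} → (c ⟶ c)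
  hf : ∀ s : ZFSet.{0}, s ∉ S → f s = 0

namespace DecObj

variable {C : Type u} [Category.{v} C] [Preadditive C]

/-- `ψ : c ⟶ c'` intertwines the decorations of `X` and `Y`; by the vanishing-outside-`S`
convention this is exactly the three-case condition of the paper. -/
def Intertwines (X Y : DecObj C) (ψ : X.c ⟶ Y.c) : Prop :=
  ∀ s : ZFSet.{0}, X.f s ≫ ψ = ψ ≫ Y.f s

/-- Morphisms in `C ◁ Set`. -/
@[ext]
structure Hom (X Y : DecObj C) where
  ψ : X.c ⟶ Y.c
  comm : Intertwines X Y ψ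

instance : Category (DecObj C) where
  Hom := Hom
  id X := ⟨𝟙 X.c, fun s => by simp [Intertwines]⟩
  comp g h := ⟨g.ψ ≫ h.ψ, fun s => by
    rw [← Category.assoc, g.comm s, Category.assoc, h.comm s, Category.assoc]⟩

@[simp] theorem id_ψ (X : DecObj C) : Hom.ψ (𝟙 X) = 𝟙 X.c := rfl

@[simp] theorem comp_ψ {X Y Z : DecObj C} (g : X ⟶ Y) (h : Y ⟶ Z) :
    (g ≫ h).ψ = g.ψ ≫ h.ψ := rfl

/-- The forgetful functor `U : C ◁ Set ⥤ C`. -/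
def forgetDec (C : Type u) [Category.{v} C] [Preadditive C] : DecObj C ⥤ C where
  obj X := X.c
  map g := g.ψ

end DecObj


/-- The object `(c, ∅, ∅)` of `C ◁ Set` with empty decoration. -/
def DecObj.emptyDec {C : Type u} [Category.{v} C] [Preadditive C] (x : C) : DecObj C :=
  ⟨x, ∅, fun _ => 0, fun _ _ => rfl⟩

/-- if the product of the objects `(cᵢ, ∅, ∅)` exists in `C ◁ Set`, then the
product of the `cᵢ` exists in `C` (the forgetful functor reflects existence of products). -/
theorem product_reflected (C : Type u) [Category.{v} C] [Preadditive C]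
    [HasZeroObject C] [HasFiniteBiproducts C] (I : Type v) (c : I → C)
    [HasProduct (fun i : I => DecObj.emptyDec (c i))] :
    HasProduct c := by
  classical
  have : HasBinaryBiproducts C := hasBinaryBiproducts_of_finite_biproducts C
  let P : DecObj C := ∏ᶜ (fun i : I => DecObj.emptyDec (c i))
  let π : ∀ i, P ⟶ DecObj.emptyDec (c i) := fun i => Pi.π _ i
  have hπ0 : ∀ (i : I) (s : ZFSet), P.f s ≫ (π i).ψ = 0 := by
    intro i s
    have h := (π i).comm s
    exact h.trans comp_zero
  -- The projections are jointly monic in `C`.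
  have jm : ∀ {x : C} (d : x ⟶ P.c), (∀ i, d ≫ (π i).ψ = 0) → d = 0 := by
    intro x d hd
    have ht₀ : P.S ∉ P.S := fun h => ZFSet.mem_irrefl _ h
    let e : x ⊞ P.c ⟶ x ⊞ P.c := biprod.fst ≫ d ≫ biprod.inr
    let N : DecObj C :=
      { c := x ⊞ P.c
        S := insert P.S P.S
        f := fun s => if s = P.S then e else biprod.snd ≫ P.f s ≫ biprod.inr
        hf := by
          intro s hs
          rw [ZFSet.mem_insert_iff] at hs
          push_neg at hs
          show (if s = P.S then e else biprod.snd ≫ P.f s ≫ biprod.inr) = 0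
          rw [if_neg hs.1, P.hf s hs.2]
          simp }
    let q : ∀ i, N ⟶ DecObj.emptyDec (c i) := fun i =>
      ⟨biprod.snd ≫ (π i).ψ, by
        intro s
        show (if s = P.S then e else biprod.snd ≫ P.f s ≫ biprod.inr) ≫ _ = _ ≫ (0 : _)
        by_cases h : s = P.S
        · rw [if_pos h]
          show (biprod.fst ≫ d ≫ biprod.inr) ≫ biprod.snd ≫ (π i).ψ = _
          rw [comp_zero]
          simp only [Category.assoc, biprod.inr_snd_assoc]
          rw [hd i, comp_zero]
        · rw [if_neg h, comp_zero]
          simp only [Category.assoc, biprod.inr_snd_assoc]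
          rw [hπ0 i s, comp_zero]⟩
    let w : N ⟶ P := Pi.lift q
    have hw : ∀ i, w ≫ π i = q i := fun i => limit.lift_π _ _
    have hew : e ≫ w.ψ = 0 := by
      have h := w.comm P.S
      rw [P.hf _ ht₀, comp_zero] at h
      have hN : N.f P.S = e := if_pos rfl
      rw [hN] at h
      exact h
    let inrHom : P ⟶ N := ⟨biprod.inr, by
      intro s
      show P.f s ≫ _ = _ ≫ (if s = P.S then e else biprod.snd ≫ P.f s ≫ biprod.inr)
      by_cases h : s = P.S
      · rw [if_pos h, h, P.hf _ ht₀]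
        simp [e]
      · rw [if_neg h]
        simp⟩
    have hid : inrHom ≫ w = 𝟙 P := by
      apply limit.hom_ext
      intro j
      obtain ⟨i⟩ := j
      have h1 : (inrHom ≫ w) ≫ π i = inrHom ≫ q i := by
        rw [Category.assoc, hw i]
      have h2 : inrHom ≫ q i = π i := by
        apply DecObj.Hom.ext
        show biprod.inr ≫ biprod.snd ≫ (π i).ψ = (π i).ψ
        simp
      have : (inrHom ≫ w) ≫ π i = 𝟙 P ≫ π i := by
        rw [h1, h2, Category.id_comp]
      simpa using this
    have hinr : biprod.inr ≫ w.ψ = 𝟙 P.c := by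
      have := congrArg DecObj.Hom.ψ hid
      simpa using this
    have h0 : biprod.inl ≫ e ≫ w.ψ = (0 : x ⟶ P.c) := by
      rw [hew, comp_zero]
    calc d = d ≫ biprod.inr ≫ w.ψ := by rw [hinr, Category.comp_id]
      _ = biprod.inl ≫ e ≫ w.ψ := by simp [e]
      _ = 0 := h0
  -- Build the limit fan in `C`.
  let lifthom : ∀ s : Fan c, DecObj.emptyDec s.pt ⟶ P := fun s =>
    Pi.lift (fun i => (⟨s.proj i, fun t => by
      simp [DecObj.emptyDec]⟩ : DecObj.emptyDec s.pt ⟶ DecObj.emptyDec (c i)))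
  have hfac : ∀ (s : Fan c) (i : I), (lifthom s).ψ ≫ (π i).ψ = s.proj i := by
    intro s i
    have h : lifthom s ≫ π i = (⟨s.proj i, fun t => by
        simp [DecObj.emptyDec]⟩ : DecObj.emptyDec s.pt ⟶ DecObj.emptyDec (c i)) :=
      limit.lift_π _ (Discrete.mk i)
    have := congrArg DecObj.Hom.ψ h
    simpa using this
  refine HasLimit.mk ⟨Fan.mk P.c (fun i => (π i).ψ),
    mkFanLimit _ (fun s => (lifthom s).ψ) (fun s i => hfac s i) ?_⟩
  intro s m hm
  have hm' : ∀ i, m ≫ (π i).ψ = s.proj i := fun i => hm i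
  let m' : s.pt ⟶ P.c := m
  let l : s.pt ⟶ P.c := (lifthom s).ψ
  have hlfac : ∀ i, l ≫ (π i).ψ = s.proj i := hfac s
  have hsub : m' - l = 0 := by
    apply jm
    intro i
    rw [Preadditive.sub_comp, hm' i, hlfac i]
    exact sub_self _
  exact sub_eq_zero.mp hsub
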